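/- Let A be a finite collection of nonempty finite subsets of a linearly ordered finite set V, and let T(A) be its Tchebyshev triangulation. Then for every k ≥ 1, 2·f_{k−1}(T(A)) = Σ_{j=k}^{2k} s_j(A)·2^{2k−j}·( C(k,2k−j) + C(k−1,2k−j) ), where C(·,·) denotes binomial coefficients; equivalently, f_{k−1}(T(A)) = Σ_{j=k}^{2k} s_j(A)·2^{2k−j−1}·( C(k,2k−j) + C(k−1,2k−j) ). -/

import Mathlib

open Finset

open scoped Classical

/-- The set of vertices of the original complex underlying a vertex `(u, v)` of the
Tchebyshev triangulation: `{u, v} ∖ {1̂}`, where `1̂ = ⊤`. -/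
def pairVertexSet {α : Type*} [DecidableEq α] (p : α × WithTop α) : Finset α :=
  WithTop.recTopCoe {p.1} (fun a => {p.1, a}) p.2

/-- The `(k-1)`-dimensional faces of the Tchebyshev triangulation `T(A)` of a collection `A`
of nonempty finite subsets of a linearly ordered set `V`: sets
`{(u_1,v_1),…,(u_k,v_k)}` with `u_i ∈ V`, `v_i ∈ V ∪ {1̂}`, `u_i < v_i`, `v_1 < ⋯ < v_k`,
such that `{u_1,v_1,…,u_k,v_k} ∖ {1̂} ∈ A`, and for each `i ≤ k-1` either `u_i = u_{i+1}`
or `v_i ≤ u_{i+1}`. -/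
def tchebFaces {α : Type*} [LinearOrder α] [DecidableEq α]
    (A : Finset (Finset α)) (k : ℕ) : Set (Finset (α × WithTop α)) :=
  {σ | ∃ e : Fin k → α × WithTop α,
      σ = Finset.image e Finset.univ ∧
      StrictMono (fun i => (e i).2) ∧
      (∀ i, ((e i).1 : WithTop α) < (e i).2) ∧
      (Finset.univ.biUnion fun i => pairVertexSet (e i)) ∈ A ∧
      (∀ i j : Fin k, (i : ℕ) + 1 = (j : ℕ) →
        (e i).1 = (e j).1 ∨ (e i).2 ≤ ((e j).1 : WithTop α))}

/-- `s_j(A)`: the number of members of `A` of cardinality `j`. -/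
def sCount {α : Type*} [DecidableEq α] (A : Finset (Finset α)) (j : ℕ) : ℕ :=
  (A.filter fun F => F.card = j).card

section Aux
variable {α : Type*} [LinearOrder α] [DecidableEq α]

lemma mem_pairVertexSet {p : α × WithTop α} {a : α} :
    a ∈ pairVertexSet p ↔ a = p.1 ∨ (a : WithTop α) = p.2 := by
  obtain ⟨u, v⟩ := p
  cases v with
  | top => simp [pairVertexSet]
  | coe b => simp [pairVertexSet]

def FaceFun {k : ℕ} (e : Fin k → α × WithTop α) : Prop :=
  StrictMono (fun i => (e i).2) ∧
  (∀ i, ((e i).1 : WithTop α) < (e i).2) ∧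
  (∀ i j : Fin k, (i : ℕ) + 1 = (j : ℕ) →
    (e i).1 = (e j).1 ∨ (e i).2 ≤ ((e j).1 : WithTop α))

def suppE {k : ℕ} (e : Fin k → α × WithTop α) : Finset α :=
  Finset.univ.biUnion fun i => pairVertexSet (e i)

lemma mem_suppE {k : ℕ} {e : Fin k → α × WithTop α} {a : α} :
    a ∈ suppE e ↔ ∃ i, a = (e i).1 ∨ (a : WithTop α) = (e i).2 := by
  simp [suppE, mem_biUnion, mem_pairVertexSet]

lemma tchebFaces_eq_image (A : Finset (Finset α)) (k : ℕ) :
    tchebFaces A k = (fun e : Fin k → α × WithTop α => Finset.image e Finset.univ) ''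
      {e | FaceFun e ∧ suppE e ∈ A} := by
  ext σ
  simp only [tchebFaces, Set.mem_setOf_eq, Set.mem_image, FaceFun, suppE]
  constructor
  · rintro ⟨e, h1, h2, h3, h4, h5⟩; exact ⟨e, ⟨⟨h2, h3, h5⟩, h4⟩, h1.symm⟩
  · rintro ⟨e, ⟨⟨h2, h3, h5⟩, h4⟩, h1⟩; exact ⟨e, h1.symm, h2, h3, h4, h5⟩

lemma image_univ_injOn (k : ℕ) :
    Set.InjOn (fun e : Fin k → α × WithTop α => Finset.image e Finset.univ)
      {e | StrictMono fun i => (e i).2} := by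
  intro e he e' he' h
  simp only [Set.mem_setOf_eq] at he he'
  simp only at h
  have himg : Finset.image (fun i => (e i).2) Finset.univ
      = Finset.image (fun i => (e' i).2) Finset.univ := by
    have := congrArg (Finset.image Prod.snd) h
    simpa [Finset.image_image, Function.comp_def] using this
  have hcard : (Finset.image (fun i => (e i).2) Finset.univ).card = k := by
    rw [Finset.card_image_of_injective _ he.injective, card_univ, Fintype.card_fin]
  have hA := Finset.orderEmbOfFin_unique (f := fun i => (e i).2) hcard
    (fun x => Finset.mem_image_of_mem _ (mem_univ x)) he
  have hB := Finset.orderEmbOfFin_unique (f := fun i => (e' i).2) hcard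
    (fun x => himg ▸ Finset.mem_image_of_mem _ (mem_univ x)) he'
  have h2 : (fun i => (e i).2) = (fun i => (e' i).2) := hA.trans hB.symm
  funext i
  have : e i ∈ Finset.image e' Finset.univ := h ▸ Finset.mem_image_of_mem _ (mem_univ i)
  obtain ⟨i', -, hi'⟩ := Finset.mem_image.1 this
  have hsnd : (e' i').2 = (e' i).2 := by
    rw [← congrFun h2 i, hi']
  have : i' = i := he'.injective hsnd
  rw [← hi', this]

instance {β : Type*} [Fintype β] : Fintype (WithTop β) := inferInstanceAs (Fintype (Option β))

lemma ncard_tchebFaces [Fintype α] (A : Finset (Finset α)) (k : ℕ) :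
    (tchebFaces A k).ncard
      = (Finset.univ.filter fun e : Fin k → α × WithTop α =>
          FaceFun e ∧ suppE e ∈ A).card := by
  rw [tchebFaces_eq_image,
    Set.ncard_image_of_injOn ((image_univ_injOn k).mono (fun e he => he.1.1))]
  have hset : {e : Fin k → α × WithTop α | FaceFun e ∧ suppE e ∈ A}
      = ↑(Finset.univ.filter fun e : Fin k → α × WithTop α => FaceFun e ∧ suppE e ∈ A) := by
    ext e; simp
  rw [hset, Set.ncard_coe_finset]

end Aux

section XN
variable {α : Type*} [LinearOrder α] [DecidableEq α]
variable (F : Finset α) (hF : F.Nonempty)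

def xN (n : ℕ) : α :=
  F.orderEmbOfFin (k := F.card) rfl
    ⟨min n (F.card - 1), by have := Finset.card_pos.mpr hF; omega⟩

lemma xN_mem (n : ℕ) : xN F hF n ∈ F := F.orderEmbOfFin_mem rfl _

lemma xN_eq_emb {n : ℕ} (hn : n < F.card) :
    xN F hF n = F.orderEmbOfFin rfl ⟨n, hn⟩ := by
  have h : min n (F.card - 1) = n := by omega
  simp only [xN]
  congr 1
  exact Fin.ext h

lemma xN_mono : Monotone (xN F hF) := by
  intro a b hab
  exact (F.orderEmbOfFin rfl).monotone (by simp only [Fin.mk_le_mk]; omega)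

lemma xN_lt {a b : ℕ} (hab : a < b) (hb : b < F.card) : xN F hF a < xN F hF b := by
  apply (F.orderEmbOfFin rfl).strictMono
  simp only [Fin.mk_lt_mk]
  omega

lemma xN_inj {a b : ℕ} (ha : a < F.card) (hb : b < F.card)
    (h : xN F hF a = xN F hF b) : a = b := by
  rcases lt_trichotomy a b with h' | h' | h'
  · exact absurd h (ne_of_lt (xN_lt F hF h' hb))
  · exact h'
  · exact absurd h.symm (ne_of_lt (xN_lt F hF h' ha))

lemma lt_of_xN_lt {a b : ℕ} (h : xN F hF a < xN F hF b) : a < b := by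
  by_contra hc
  exact absurd (xN_mono F hF (not_lt.mp hc)) (not_le.mpr h)

lemma xN_surj {a : α} (ha : a ∈ F) : ∃ n, n < F.card ∧ xN F hF n = a := by
  have : a ∈ Set.range (F.orderEmbOfFin rfl) := by
    rw [Finset.range_orderEmbOfFin]; exact ha
  obtain ⟨i, hi⟩ := this
  exact ⟨i, i.isLt, by rw [xN_eq_emb F hF i.isLt]; simpa using hi⟩

lemma card_filter_lt {p : ℕ} (hp : p < F.card) :
    (F.filter (fun a => a < xN F hF p)).card = p := by
  have himg : F.filter (fun a => a < xN F hF p) = (Finset.range p).image (xN F hF) := by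
    ext a
    simp only [mem_filter, mem_image, mem_range]
    constructor
    · rintro ⟨haF, hlt⟩
      obtain ⟨n, hn, rfl⟩ := xN_surj F hF haF
      exact ⟨n, lt_of_xN_lt F hF hlt, rfl⟩
    · rintro ⟨n, hn, rfl⟩
      exact ⟨xN_mem F hF n, xN_lt F hF hn hp⟩
  rw [himg, Finset.card_image_of_injOn, Finset.card_range]
  intro a ha b hb hab
  exact xN_inj F hF (lt_trans (mem_range.1 ha) hp) (lt_trans (mem_range.1 hb) hp) hab

lemma card_filter_between {p q : ℕ} (hpq : p < q) (hq : q < F.card) :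
    (F.filter fun a => xN F hF p < a ∧ a < xN F hF q).card = q - p - 1 := by
  have himg : (F.filter fun a => xN F hF p < a ∧ a < xN F hF q)
      = (Finset.Ioo p q).image (xN F hF) := by
    ext a
    simp only [mem_filter, mem_image, mem_Ioo]
    constructor
    · rintro ⟨haF, h1, h2⟩
      obtain ⟨n, hn, rfl⟩ := xN_surj F hF haF
      exact ⟨n, ⟨lt_of_xN_lt F hF h1, lt_of_xN_lt F hF h2⟩, rfl⟩
    · rintro ⟨n, ⟨h1, h2⟩, rfl⟩
      exact ⟨xN_mem F hF n, xN_lt F hF h1 (lt_trans h2 hq), xN_lt F hF h2 hq⟩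
  rw [himg, Finset.card_image_of_injOn, Nat.card_Ioo]
  intro a ha b hb hab
  exact xN_inj F hF (lt_trans (mem_Ioo.1 ha).2 hq) (lt_trans (mem_Ioo.1 hb).2 hq) hab

lemma card_filter_gt {p : ℕ} (hp : p < F.card) :
    (F.filter fun a => xN F hF p < a).card = F.card - p - 1 := by
  have himg : (F.filter fun a => xN F hF p < a)
      = (Finset.Ioo p F.card).image (xN F hF) := by
    ext a
    simp only [mem_filter, mem_image, mem_Ioo]
    constructor
    · rintro ⟨haF, h1⟩
      obtain ⟨n, hn, rfl⟩ := xN_surj F hF haF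
      exact ⟨n, ⟨lt_of_xN_lt F hF h1, hn⟩, rfl⟩
    · rintro ⟨n, ⟨h1, h2⟩, rfl⟩
      exact ⟨xN_mem F hF n, xN_lt F hF h1 h2⟩
  rw [himg, Finset.card_image_of_injOn, Nat.card_Ioo]
  intro a ha b hb hab
  exact xN_inj F hF (mem_Ioo.1 ha).2 (mem_Ioo.1 hb).2 hab

end XN

section VIdx
variable {K : ℕ}

def vIdx (g : Fin K → Fin 3) : ℕ → ℕ
  | 0 => 1
  | n + 1 => vIdx g n + (if h : n < K then (if g ⟨n, h⟩ = 2 then 2 else 1) else 1)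

lemma vIdx_succ {g : Fin K → Fin 3} {n : ℕ} (h : n < K) :
    vIdx g (n + 1) = vIdx g n + (if g ⟨n, h⟩ = 2 then 2 else 1) := by
  simp [vIdx, h]

lemma vIdx_lt_succ (g : Fin K → Fin 3) (n : ℕ) : vIdx g n < vIdx g (n + 1) := by
  simp only [vIdx]
  split_ifs <;> omega

lemma vIdx_strictMono (g : Fin K → Fin 3) : StrictMono (vIdx g) :=
  strictMono_nat_of_lt_succ (vIdx_lt_succ g)

lemma vIdx_add_le (g : Fin K → Fin 3) {a b : ℕ} (hab : a ≤ b) :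
    vIdx g a + (b - a) ≤ vIdx g b := by
  induction b with
  | zero =>
    have : a = 0 := by omega
    subst this; simp
  | succ b ih =>
    rcases Nat.eq_or_lt_of_le hab with h | h
    · subst h; simp
    · have h1 : a ≤ b := by omega
      have := ih h1
      have := vIdx_lt_succ g b
      omega

def mcount (g : Fin K → Fin 3) : ℕ := (Finset.univ.filter fun i => g i = 2).card

lemma vIdx_count (g : Fin K → Fin 3) :
    ∀ n, n ≤ K →
      vIdx g n = 1 + n + ∑ i : Fin K, (if (i : ℕ) < n ∧ g i = 2 then 1 else 0) := by
  intro n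
  induction n with
  | zero => simp [vIdx]
  | succ n ih =>
    intro hn
    have h : n < K := hn
    have hsum : ∑ i : Fin K, (if (i : ℕ) < n + 1 ∧ g i = 2 then 1 else 0)
        = ∑ i : Fin K, ((if (i : ℕ) < n ∧ g i = 2 then 1 else 0)
            + (if (i : ℕ) = n ∧ g i = 2 then 1 else 0)) := by
      refine Finset.sum_congr rfl fun i _ => ?_
      simp only [ite_and]
      split_ifs <;> omega
    have hlast : ∑ i : Fin K, (if (i : ℕ) = n ∧ g i = 2 then 1 else 0)
        = (if g ⟨n, h⟩ = 2 then 1 else 0) := by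
      rw [Finset.sum_eq_single (⟨n, h⟩ : Fin K)]
      · simp
      · intro i _ hne
        have : (i : ℕ) ≠ n := fun hc => hne (Fin.ext hc)
        simp [this]
      · intro hmem; exact absurd (mem_univ _) hmem
    rw [vIdx_succ h, ih (le_of_lt h), hsum, Finset.sum_add_distrib, hlast]
    by_cases hg : g ⟨n, h⟩ = 2
    · rw [if_pos hg, if_pos hg]; omega
    · rw [if_neg hg, if_neg hg]; omega

lemma vIdx_K (g : Fin K → Fin 3) : vIdx g K = 1 + K + mcount g := by
  rw [vIdx_count g K le_rfl, mcount, Finset.card_filter]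
  congr 1
  exact Finset.sum_congr rfl fun i _ => by simp [i.isLt]

lemma mcount_le (g : Fin K → Fin 3) : mcount g ≤ K := by
  have := Finset.card_filter_le (Finset.univ : Finset (Fin K)) (fun i => g i = 2)
  simpa [mcount] using this

lemma fin3_cases (x : Fin 3) : x = 0 ∨ x = 1 ∨ x = 2 := by
  fin_cases x <;> simp

end VIdx

section Count

def Dset (K j : ℕ) : Finset (Bool × (Fin K → Fin 3)) :=
  Finset.univ.filter fun d => mcount d.2 + K + 2 = j + (if d.1 then 1 else 0)

lemma card_filter_equiv {β γ : Type*} [Fintype β] [Fintype γ] [DecidableEq γ]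
    (E : β ≃ γ) (p : γ → Prop) [DecidablePred p] :
    (Finset.univ.filter p).card = (Finset.univ.filter fun b => p (E b)).card := by
  have himg : Finset.univ.filter p
      = (Finset.univ.filter fun b => p (E b)).image E := by
    ext c
    simp only [mem_filter, mem_image, mem_univ, true_and]
    constructor
    · intro hc
      exact ⟨E.symm c, by simpa using hc, by simp⟩
    · rintro ⟨b, hb, rfl⟩; exact hb
  rw [himg, Finset.card_image_of_injective _ E.injective]

lemma card_filter_prod {β γ : Type*} [Fintype β] [Fintype γ]
    (p : β × γ → Prop) [DecidablePred p] :
    (Finset.univ.filter p).card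
      = ∑ b : β, (Finset.univ.filter fun c => p (b, c)).card := by
  rw [Finset.card_filter]
  rw [Fintype.sum_prod_type]
  exact Finset.sum_congr rfl fun b _ => by rw [Finset.card_filter]

lemma mcount_cons {K : ℕ} (a : Fin 3) (g : Fin K → Fin 3) :
    mcount (Fin.cons a g) = (if a = 2 then 1 else 0) + mcount g := by
  simp only [mcount, Finset.card_filter, Fin.sum_univ_succ, Fin.cons_zero, Fin.cons_succ]

lemma countg (K : ℕ) : ∀ m : ℕ,
    (Finset.univ.filter fun g : Fin K → Fin 3 => mcount g = m).card
      = K.choose m * 2 ^ (K - m) := by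
  induction K with
  | zero =>
    intro m
    rcases m with _ | m
    · rw [Finset.filter_true_of_mem (fun g _ => by
        simp [mcount, Finset.filter_eq_empty_iff])]
      simp
    · rw [Finset.filter_false_of_mem (fun g _ => by
        have : mcount g = 0 := by
          simp [mcount, Finset.filter_eq_empty_iff]
        omega)]
      simp
  | succ K ih =>
    intro m
    have hEq := card_filter_equiv (Fin.consEquiv fun _ : Fin (K + 1) => Fin 3)
      (fun g : Fin (K + 1) → Fin 3 => mcount g = m)
    rw [hEq, card_filter_prod (fun x : Fin 3 × (Fin K → Fin 3) =>
      mcount (Fin.consEquiv _ x) = m)]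
    have hterm : ∀ a : Fin 3, (Finset.univ.filter fun g : Fin K → Fin 3 =>
        mcount (Fin.consEquiv (fun _ => Fin 3) (a, g)) = m).card
        = (Finset.univ.filter fun g : Fin K → Fin 3 =>
            (if a = 2 then 1 else 0) + mcount g = m).card := by
      intro a
      congr 1
      apply Finset.filter_congr
      intro g _
      rw [show (Fin.consEquiv (fun _ => Fin 3) (a, g) : Fin (K+1) → Fin 3)
          = Fin.cons a g from rfl, mcount_cons]
    rw [Fin.sum_univ_three]
    rw [hterm 0, hterm 1, hterm 2]
    have hA : (Finset.univ.filter fun g : Fin K → Fin 3 =>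
        (if (0 : Fin 3) = 2 then 1 else 0) + mcount g = m).card
        = (Finset.univ.filter fun g : Fin K → Fin 3 => mcount g = m).card := by
      refine congrArg Finset.card (Finset.filter_congr fun g _ => ?_)
      simp
    have hB : (Finset.univ.filter fun g : Fin K → Fin 3 =>
        (if (1 : Fin 3) = 2 then 1 else 0) + mcount g = m).card
        = (Finset.univ.filter fun g : Fin K → Fin 3 => mcount g = m).card := by
      refine congrArg Finset.card (Finset.filter_congr fun g _ => ?_)
      simp
    have hC : (Finset.univ.filter fun g : Fin K → Fin 3 =>
        (if (2 : Fin 3) = 2 then 1 else 0) + mcount g = m).card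
        = (Finset.univ.filter fun g : Fin K → Fin 3 => 1 + mcount g = m).card := by
      refine congrArg Finset.card (Finset.filter_congr fun g _ => ?_)
      simp
    rw [hA, hB, hC]
    rcases m with _ | m
    · have hC0 : (Finset.univ.filter fun g : Fin K → Fin 3 => 1 + mcount g = 0).card = 0 := by
        rw [Finset.card_eq_zero, Finset.filter_eq_empty_iff]
        intro g _
        omega
      rw [hC0, ih 0]
      have h2p : (2:ℕ) ^ (K + 1) = 2 ^ K + 2 ^ K := by rw [pow_succ]; ring
      simp only [Nat.choose_zero_right, Nat.sub_zero, one_mul, add_zero]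
      omega
    · have hshift : (Finset.univ.filter fun g : Fin K → Fin 3 => 1 + mcount g = m + 1).card
          = (Finset.univ.filter fun g : Fin K → Fin 3 => mcount g = m).card := by
        congr 1
        apply Finset.filter_congr
        intro g _
        constructor
        · intro h; omega
        · intro h; omega
      rw [hshift, ih (m + 1), ih m]
      rw [Nat.choose_succ_succ K m]
      rcases le_or_gt (m + 1) K with h | h
      · have h1 : K - m = (K - (m + 1)) + 1 := by omega
        have hexp : K + 1 - (m + 1) = K - m := by omega
        rw [hexp, h1, pow_succ]
        ring
      · have h1 : K.choose (m + 1) = 0 := Nat.choose_eq_zero_of_lt h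
        rw [h1]
        rcases Nat.eq_or_lt_of_le (by omega : K ≤ m) with h2 | h2
        · subst h2
          simp
        · have hz : K.choose m = 0 := Nat.choose_eq_zero_of_lt h2
          simp [hz]

lemma count_shift {K : ℕ} (c j : ℕ) (h : c ≤ j) :
    (Finset.univ.filter fun g : Fin K → Fin 3 => mcount g + c = j).card
      = K.choose (j - c) * 2 ^ (K - (j - c)) := by
  rw [← countg K (j - c)]
  congr 1
  apply Finset.filter_congr
  intro g _
  constructor
  · intro hh; omega
  · intro hh; omega

lemma count_shift_zero {K : ℕ} (c j : ℕ) (h : j < c) :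
    (Finset.univ.filter fun g : Fin K → Fin 3 => mcount g + c = j).card = 0 := by
  rw [Finset.filter_false_of_mem (fun g _ => by omega)]
  simp

lemma Dset_card_split (K j : ℕ) :
    (Dset K j).card
      = (Finset.univ.filter fun g : Fin K → Fin 3 => mcount g + (K + 2) = j).card
        + (Finset.univ.filter fun g : Fin K → Fin 3 => mcount g + (K + 1) = j).card := by
  rw [Dset, card_filter_prod (fun d : Bool × (Fin K → Fin 3) =>
    mcount d.2 + K + 2 = j + (if d.1 then 1 else 0))]
  rw [Fintype.sum_bool]
  have h1 : (Finset.univ.filter fun c : Fin K → Fin 3 =>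
      mcount c + K + 2 = j + (if (true : Bool) then 1 else 0))
      = Finset.univ.filter fun c : Fin K → Fin 3 => mcount c + (K + 1) = j :=
    Finset.filter_congr fun c _ => by rw [if_pos rfl]; omega
  have h2 : (Finset.univ.filter fun c : Fin K → Fin 3 =>
      mcount c + K + 2 = j + (if (false : Bool) then 1 else 0))
      = Finset.univ.filter fun c : Fin K → Fin 3 => mcount c + (K + 2) = j :=
    Finset.filter_congr fun c _ => by rw [if_neg Bool.false_ne_true]; omega
  rw [h1, h2]
  exact add_comm _ _

lemma Dset_card_zero (K j : ℕ) (hj : j < K + 1 ∨ 2 * K + 2 < j) : (Dset K j).card = 0 := by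
  rw [Dset_card_split]
  rcases hj with hj | hj
  · rw [count_shift_zero _ _ (by omega), count_shift_zero _ _ (by omega)]
  · rw [count_shift _ _ (by omega), count_shift _ _ (by omega)]
    rw [Nat.choose_eq_zero_of_lt (by omega), Nat.choose_eq_zero_of_lt (by omega)]
    simp

lemma two_Dset_card (K j : ℕ) (hj1 : K + 1 ≤ j) (hj2 : j ≤ 2 * K + 2) :
    2 * (Dset K j).card
      = 2 ^ (2 * (K + 1) - j) * ((K + 1).choose (2 * (K + 1) - j)
          + K.choose (2 * (K + 1) - j)) := by
  rw [Dset_card_split]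
  rcases Nat.eq_or_lt_of_le hj1 with h1 | h1
  · -- j = K + 1
    subst h1
    rw [count_shift_zero _ _ (by omega), count_shift _ _ (by omega)]
    have e1 : K + 1 - (K + 1) = 0 := by omega
    have e2 : 2 * (K + 1) - (K + 1) = K + 1 := by omega
    rw [e1, e2]
    rw [Nat.choose_self, Nat.choose_eq_zero_of_lt (Nat.lt_succ_self K),
      Nat.choose_zero_right, Nat.sub_zero]
    rw [pow_succ]
    ring
  · -- K + 2 ≤ j
    rw [count_shift _ _ (by omega), count_shift _ _ (by omega)]
    set r := 2 * (K + 1) - j with hr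
    clear_value r
    have hm0 : j - (K + 2) = K - r := by omega
    have hm1 : j - (K + 1) = K - r + 1 := by omega
    have hrK : r ≤ K := by omega
    rw [hm0, hm1]
    have e0 : K - (K - r) = r := by omega
    rw [e0]
    have hc0 : K.choose (K - r) = K.choose r := Nat.choose_symm hrK
    rw [hc0]
    rcases Nat.eq_zero_or_pos r with h2 | h2
    · -- j = 2K + 2
      rw [h2]
      have : K - 0 + 1 = K + 1 := by omega
      rw [this]
      rw [Nat.choose_eq_zero_of_lt (Nat.lt_succ_self K)]
      simp
    · obtain ⟨s, rfl⟩ : ∃ s, r = s + 1 := ⟨r - 1, by omega⟩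
      have hm1' : K - (s + 1) + 1 = K - s := by omega
      rw [hm1']
      have hcs : K.choose (K - s) = K.choose s := Nat.choose_symm (by omega)
      rw [hcs]
      have he1 : K - (K - s) = s := by omega
      rw [he1]
      rw [Nat.choose_succ_succ K s]
      rw [pow_succ]
      ring

section Build
variable {α : Type*} [LinearOrder α] [DecidableEq α]
variable (F : Finset α) (hF : F.Nonempty) {K : ℕ}

def uN (g : Fin K → Fin 3) : ℕ → α
  | 0 => xN F hF 0
  | n + 1 =>
    if h : n < K then
      if g ⟨n, h⟩ = 0 then uN g n
      else if g ⟨n, h⟩ = 1 then xN F hF (vIdx g n)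
      else xN F hF (vIdx g n + 1)
    else uN g n

lemma uN_succ (g : Fin K → Fin 3) {n : ℕ} (h : n < K) :
    uN F hF g (n + 1)
      = if g ⟨n, h⟩ = 0 then uN F hF g n
        else if g ⟨n, h⟩ = 1 then xN F hF (vIdx g n)
        else xN F hF (vIdx g n + 1) := by
  simp [uN, h]

lemma uN_mem (g : Fin K → Fin 3) : ∀ n, uN F hF g n ∈ F := by
  intro n
  induction n with
  | zero => exact xN_mem F hF 0
  | succ n ih =>
    rcases Nat.lt_or_ge n K with h | h
    · rw [uN_succ F hF g h]
      split_ifs <;> first | exact ih | exact xN_mem F hF _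
    · show (if h : n < K then _ else uN F hF g n) ∈ F
      rw [dif_neg (by omega)]
      exact ih

lemma uN_lt (g : Fin K → Fin 3) :
    ∀ n, n ≤ K → vIdx g n < F.card → uN F hF g n < xN F hF (vIdx g n) := by
  intro n
  induction n with
  | zero =>
    intro _ hb
    exact xN_lt F hF zero_lt_one hb
  | succ n ih =>
    intro hn hb
    have h : n < K := hn
    have hbn : vIdx g n < F.card := lt_trans (vIdx_lt_succ g n) hb
    rw [uN_succ F hF g h]
    rcases fin3_cases (g ⟨n, h⟩) with hg | hg | hg
    · rw [if_pos hg]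
      have hv : vIdx g (n + 1) = vIdx g n + 1 := by
        rw [vIdx_succ h, if_neg (by simp [hg])]
      exact lt_trans (ih (le_of_lt h) hbn) (xN_lt F hF (by omega) hb)
    · rw [if_neg (by simp [hg]), if_pos hg]
      exact xN_lt F hF (vIdx_lt_succ g n) hb
    · rw [if_neg (by simp [hg]), if_neg (by simp [hg])]
      have hv : vIdx g (n + 1) = vIdx g n + 2 := by
        rw [vIdx_succ h, if_pos hg]
      exact xN_lt F hF (by omega) hb

lemma uN_chain (g : Fin K → Fin 3) {n : ℕ} (h : n < K) :
    uN F hF g (n + 1) = uN F hF g n ∨ xN F hF (vIdx g n) ≤ uN F hF g (n + 1) := by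
  rw [uN_succ F hF g h]
  rcases fin3_cases (g ⟨n, h⟩) with hg | hg | hg
  · left; rw [if_pos hg]
  · right; rw [if_neg (by simp [hg]), if_pos hg]
  · right; rw [if_neg (by simp [hg]), if_neg (by simp [hg])]
    exact xN_mono F hF (Nat.le_succ _)

noncomputable def buildE (g : Fin K → Fin 3) (t : Bool) : Fin (K + 1) → α × WithTop α :=
  fun i =>
  (uN F hF g i,
    if t = true ∧ (i : ℕ) = K then (⊤ : WithTop α)
    else ((xN F hF (vIdx g (i : ℕ)) : α) : WithTop α))

lemma build_bnd (g : Fin K → Fin 3) (t : Bool)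
    (hvK : vIdx g K + 1 = F.card + (if t then 1 else 0)) :
    ∀ n ≤ K, ¬(t = true ∧ n = K) → vIdx g n < F.card := by
  intro n hn hnt
  rcases Nat.eq_or_lt_of_le hn with h | h
  · subst h
    have ht : t = false := by
      cases t
      · rfl
      · exact absurd ⟨rfl, rfl⟩ hnt
    rw [ht] at hvK
    simp only [if_neg Bool.false_ne_true] at hvK
    omega
  · have h1 := vIdx_strictMono g h
    cases t
    · simp only [if_neg Bool.false_ne_true] at hvK
      omega
    · simp only [if_true] at hvK
      omega

lemma buildE_face (g : Fin K → Fin 3) (t : Bool)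
    (hd : mcount g + K + 2 = F.card + (if t then 1 else 0)) :
    FaceFun (buildE F hF g t) ∧ suppE (buildE F hF g t) = F := by
  have hvK : vIdx g K + 1 = F.card + (if t then 1 else 0) := by
    rw [vIdx_K]; omega
  have bnd := build_bnd F g t hvK
  constructor
  · refine ⟨?_, ?_, ?_⟩
    · -- StrictMono snd
      intro i i' hlt
      have hii : (i : ℕ) < (i' : ℕ) := hlt
      simp only [buildE]
      have hiK : ¬(t = true ∧ (i : ℕ) = K) := by
        rintro ⟨-, hiK⟩
        omega
      rw [if_neg hiK]
      by_cases hi' : t = true ∧ (i' : ℕ) = K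
      · rw [if_pos hi']
        exact WithTop.coe_lt_top _
      · rw [if_neg hi']
        exact WithTop.coe_lt_coe.mpr
          (xN_lt F hF (vIdx_strictMono g hii) (bnd i' (by omega) hi'))
    · -- fst < snd
      intro i
      simp only [buildE]
      by_cases hi : t = true ∧ (i : ℕ) = K
      · rw [if_pos hi]
        exact WithTop.coe_lt_top _
      · rw [if_neg hi]
        exact WithTop.coe_lt_coe.mpr (uN_lt F hF g i (by omega) (bnd i (by omega) hi))
    · -- chain
      intro i i' hii
      have h : (i : ℕ) < K := by omega
      rcases uN_chain F hF g h with hc | hc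
      · left
        simp only [buildE]
        rw [show ((i' : ℕ)) = (i : ℕ) + 1 from hii.symm] at *
        exact hc.symm
      · right
        simp only [buildE]
        have hiK : ¬(t = true ∧ (i : ℕ) = K) := by rintro ⟨-, h2⟩; omega
        rw [if_neg hiK]
        rw [show ((i' : ℕ)) = (i : ℕ) + 1 from hii.symm]
        exact WithTop.coe_le_coe.mpr hc
  · -- support
    apply Finset.Subset.antisymm
    · intro a ha
      rw [mem_suppE] at ha
      obtain ⟨i, hi | hi⟩ := ha
      · rw [hi]; exact uN_mem F hF g i
      · simp only [buildE] at hi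
        by_cases ht : t = true ∧ (i : ℕ) = K
        · rw [if_pos ht] at hi
          exact absurd hi (WithTop.coe_ne_top)
        · rw [if_neg ht] at hi
          rw [WithTop.coe_inj] at hi
          rw [hi]; exact xN_mem F hF _
    · -- F ⊆ supp via hit lemma
      have hit : ∀ n, n ≤ K → ∀ p, p ≤ vIdx g n → p < F.card →
          xN F hF p ∈ suppE (buildE F hF g t) := by
        intro n
        induction n with
        | zero =>
          intro _ p hp hpj
          have hv0 : vIdx g 0 = 1 := rfl
          rw [hv0] at hp
          interval_cases p
          · exact mem_suppE.mpr ⟨0, Or.inl rfl⟩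
          · refine mem_suppE.mpr ⟨0, Or.inr ?_⟩
            simp only [buildE]
            by_cases ht : t = true ∧ ((0 : Fin (K+1)) : ℕ) = K
            · exfalso
              have hK0 : K = 0 := by simpa using ht.2.symm
              have h1 : vIdx g K = vIdx g 0 := congrArg (vIdx g) hK0
              rw [ht.1] at hvK
              simp at hvK
              have h2 : vIdx g 0 = 1 := rfl
              omega
            · rw [if_neg ht]
              norm_num [hv0]
        | succ n ih =>
          intro hn p hp hpj
          have h : n < K := hn
          by_cases hple : p ≤ vIdx g n
          · exact ih (by omega) p hple hpj
          · push_neg at hple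
            have htop_excl : p = vIdx g (n + 1) → xN F hF p ∈ suppE (buildE F hF g t) := by
              intro hpeq
              by_cases htK : t = true ∧ n + 1 = K
              · exfalso
                rw [htK.1] at hvK
                simp at hvK
                rw [htK.2] at hpeq
                omega
              · refine mem_suppE.mpr ⟨⟨n + 1, by omega⟩, Or.inr ?_⟩
                simp only [buildE]
                rw [if_neg (by simpa using htK)]
                rw [hpeq]
            rcases fin3_cases (g ⟨n, h⟩) with hg | hg | hg
            · have hv : vIdx g (n + 1) = vIdx g n + 1 := by
                rw [vIdx_succ h, if_neg (by simp [hg])]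
              exact htop_excl (by omega)
            · have hv : vIdx g (n + 1) = vIdx g n + 1 := by
                rw [vIdx_succ h, if_neg (by simp [hg])]
              exact htop_excl (by omega)
            · have hv : vIdx g (n + 1) = vIdx g n + 2 := by
                rw [vIdx_succ h, if_pos hg]
              rcases (by omega : p = vIdx g n + 1 ∨ p = vIdx g (n + 1)) with hp1 | hp1
              · refine mem_suppE.mpr ⟨⟨n + 1, by omega⟩, Or.inl ?_⟩
                simp only [buildE]
                rw [hp1]
                rw [uN_succ F hF g h, if_neg (by simp [hg]), if_neg (by simp [hg])]
              · exact htop_excl hp1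
      intro a ha
      obtain ⟨p, hp, rfl⟩ := xN_surj F hF ha
      refine hit K le_rfl p ?_ hp
      rcases Bool.eq_false_or_eq_true t with ht | ht <;> rw [ht] at hvK <;> simp at hvK <;> omega

end Build

section Inj
variable {α : Type*} [LinearOrder α] [DecidableEq α]
variable (F : Finset α) (hF : F.Nonempty) {K : ℕ}

lemma buildE_inj (g g' : Fin K → Fin 3) (t t' : Bool)
    (hd : mcount g + K + 2 = F.card + (if t then 1 else 0))
    (hd' : mcount g' + K + 2 = F.card + (if t' then 1 else 0))
    (heq : buildE F hF g t = buildE F hF g' t') : t = t' ∧ g = g' := by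
  have hvK : vIdx g K + 1 = F.card + (if t then 1 else 0) := by rw [vIdx_K]; omega
  have hvK' : vIdx g' K + 1 = F.card + (if t' then 1 else 0) := by rw [vIdx_K]; omega
  have bnd := build_bnd F g t hvK
  have bnd' := build_bnd F g' t' hvK'
  -- t = t'
  have hsnd := congrArg Prod.snd (congrFun heq ⟨K, Nat.lt_succ_self K⟩)
  simp only [buildE] at hsnd
  have htt : t = t' := by
    cases t <;> cases t'
    · rfl
    · simp at hsnd
    · simp at hsnd
    · rfl
  refine ⟨htt, ?_⟩
  -- g = g'
  have key : ∀ n, n ≤ K → vIdx g n = vIdx g' n ∧ uN F hF g n = uN F hF g' n ∧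
      ∀ m, m < n → ∀ (hm : m < K), g ⟨m, hm⟩ = g' ⟨m, hm⟩ := by
    intro n
    induction n with
    | zero => exact fun _ => ⟨rfl, rfl, fun m hm _ => absurd hm (by omega)⟩
    | succ n ih =>
      intro hn
      have h : n < K := hn
      obtain ⟨hvn, hun, hgm⟩ := ih (le_of_lt h)
      have hbn : vIdx g n < F.card := bnd n (le_of_lt h) (by rintro ⟨-, h2⟩; omega)
      have hu := congrArg Prod.fst (congrFun heq ⟨n + 1, by omega⟩)
      simp only [buildE] at hu
      have hd0 : uN F hF g n < xN F hF (vIdx g n) := uN_lt F hF g n (le_of_lt h) hbn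
      have hb2 : g ⟨n, h⟩ = 2 → vIdx g n + 1 < F.card := by
        intro hg2
        have hmono := (vIdx_strictMono g).monotone hn
        rw [vIdx_succ h, if_pos hg2] at hmono
        cases t <;> simp at hvK <;> omega
      have hb2' : g' ⟨n, h⟩ = 2 → vIdx g n + 1 < F.card := by
        intro hg2
        have hmono := (vIdx_strictMono g').monotone hn
        rw [vIdx_succ h, if_pos hg2] at hmono
        rw [hvn]
        cases t' <;> simp at hvK' <;> omega
      have hgn : g ⟨n, h⟩ = g' ⟨n, h⟩ := by
        rw [uN_succ F hF g h, uN_succ F hF g' h] at hu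
        rcases fin3_cases (g ⟨n, h⟩) with hg | hg | hg <;>
          rcases fin3_cases (g' ⟨n, h⟩) with hg' | hg' | hg' <;>
          rw [hg, hg'] <;> exfalso
        · -- g = 0, g' = 1
          rw [if_pos hg, if_neg (by simp [hg']), if_pos hg'] at hu
          rw [← hvn] at hu
          exact absurd hu (ne_of_lt hd0)
        · -- g = 0, g' = 2
          rw [if_pos hg, if_neg (by simp [hg']), if_neg (by simp [hg'])] at hu
          rw [← hvn] at hu
          exact absurd hu (ne_of_lt (lt_of_lt_of_le hd0 (xN_mono F hF (Nat.le_succ _))))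
        · -- g = 1, g' = 0
          rw [if_neg (by simp [hg]), if_pos hg, if_pos hg'] at hu
          rw [← hun] at hu
          exact absurd hu.symm (ne_of_lt hd0)
        · -- g = 1, g' = 2
          rw [if_neg (by simp [hg]), if_pos hg, if_neg (by simp [hg']),
            if_neg (by simp [hg'])] at hu
          rw [← hvn] at hu
          have := xN_inj F hF hbn (hb2' hg') hu
          omega
        · -- g = 2, g' = 0
          rw [if_neg (by simp [hg]), if_neg (by simp [hg]), if_pos hg'] at hu
          rw [← hun] at hu
          exact absurd hu.symm
            (ne_of_lt (lt_of_lt_of_le hd0 (xN_mono F hF (Nat.le_succ _))))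
        · -- g = 2, g' = 1
          rw [if_neg (by simp [hg]), if_neg (by simp [hg]), if_neg (by simp [hg']),
            if_pos hg'] at hu
          rw [← hvn] at hu
          have := xN_inj F hF (hb2 hg) hbn hu
          omega
      refine ⟨?_, ?_, ?_⟩
      · rw [vIdx_succ h, vIdx_succ (g := g') h, hgn, hvn]
      · rw [uN_succ F hF g h, uN_succ F hF g' h, hgn, hvn, hun]
      · intro m hm hmK
        rcases Nat.lt_or_ge m n with h2 | h2
        · exact hgm m h2 hmK
        · have : m = n := by omega
          subst this
          exact hgn
  funext i
  have := (key K le_rfl).2.2 i i.isLt i.isLt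
  simpa using this

end Inj

section Surj
variable {α : Type*} [LinearOrder α] [DecidableEq α]
variable {K : ℕ} {e : Fin (K + 1) → α × WithTop α} {F : Finset α}

lemma chain_le (hP : FaceFun e) : ∀ a b : Fin (K + 1), a ≤ b →
    (e b).1 = (e a).1 ∨ (e a).2 ≤ ((e b).1 : WithTop α) := by
  intro a b
  induction b using Fin.induction with
  | zero =>
    intro hab
    have : a = 0 := Fin.le_zero_iff.mp hab
    subst this
    exact Or.inl rfl
  | succ b ihb =>
    intro hab
    rcases eq_or_lt_of_le hab with h | h
    · subst h
      exact Or.inl rfl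
    · have hab' : a ≤ b.castSucc := by
        rw [Fin.le_def, Fin.coe_castSucc]
        rw [Fin.lt_def] at h
        simp only [Fin.val_succ] at h
        omega
      have hch := hP.2.2 b.castSucc b.succ (by simp)
      rcases ihb hab' with h1 | h1 <;> rcases hch with h2 | h2
      · exact Or.inl (h2.symm.trans h1)
      · exact Or.inr (le_trans (le_of_eq (congrArg (fun x => (e x).2) (rfl : a = a)) |>.trans
          (hP.1.monotone hab')) h2)
      · right
        rw [h2] at h1
        exact h1
      · right
        have h3 : ((e b.castSucc).1 : WithTop α) < (e b.castSucc).2 := hP.2.1 b.castSucc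
        exact le_trans h1 (le_trans (le_of_lt h3) h2)

lemma mem_F_iff (hsupp : suppE e = F) {a : α} :
    a ∈ F ↔ ∃ i, a = (e i).1 ∨ (a : WithTop α) = (e i).2 := by
  rw [← hsupp]; exact mem_suppE

lemma below_elem (hP : FaceFun e) (hsupp : suppE e = F) {a : α} (haF : a ∈ F)
    (h : (a : WithTop α) < (e 0).2) : a = (e 0).1 := by
  obtain ⟨m, hm | hm⟩ := (mem_F_iff hsupp).1 haF
  · subst hm
    rcases chain_le hP 0 m (Fin.zero_le m) with h1 | h1
    · exact h1
    · exact absurd h (not_lt.mpr h1)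
  · exfalso
    have := hP.1.monotone (Fin.zero_le m)
    rw [← hm] at this
    exact absurd h (not_lt.mpr this)

lemma gap_elem (hP : FaceFun e) (hsupp : suppE e = F) {i i' : Fin (K + 1)}
    (hii : (i : ℕ) + 1 = (i' : ℕ)) {a : α} (haF : a ∈ F)
    (h1 : (e i).2 < (a : WithTop α)) (h2 : (a : WithTop α) < (e i').2) :
    a = (e i').1 := by
  have hilt : i < i' := by rw [Fin.lt_def]; omega
  obtain ⟨m, hm | hm⟩ := (mem_F_iff hsupp).1 haF
  · subst hm
    have him : i < m := by
      by_contra hc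
      push_neg at hc
      have hv : (e m).2 ≤ (e i).2 := hP.1.monotone hc
      exact absurd h1 (not_lt.mpr (le_trans (le_of_lt (hP.2.1 m)) hv))
    have hi'm : i' ≤ m := by
      rw [Fin.le_def]
      rw [Fin.lt_def] at him
      omega
    rcases chain_le hP i' m hi'm with h3 | h3
    · exact h3
    · exact absurd h2 (not_lt.mpr h3)
  · exfalso
    have hmi : i < m := by
      by_contra hc
      push_neg at hc
      have hv : (e m).2 ≤ (e i).2 := hP.1.monotone hc
      rw [← hm] at hv
      exact absurd h1 (not_lt.mpr hv)
    have hi'm : i' ≤ m := by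
      rw [Fin.le_def]
      rw [Fin.lt_def] at hmi
      omega
    have := hP.1.monotone hi'm
    rw [← hm] at this
    exact absurd h2 (not_lt.mpr this)

lemma above_elem (hP : FaceFun e) (hsupp : suppE e = F) {i i' : Fin (K + 1)}
    (hii : (i : ℕ) + 1 = (i' : ℕ)) (hlast : (i' : ℕ) = K)
    (htop : (e i').2 = ⊤) {a : α} (haF : a ∈ F)
    (h1 : (e i).2 < (a : WithTop α)) : a = (e i').1 := by
  obtain ⟨m, hm | hm⟩ := (mem_F_iff hsupp).1 haF
  · subst hm
    have him : i < m := by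
      by_contra hc
      push_neg at hc
      have hv : (e m).2 ≤ (e i).2 := hP.1.monotone hc
      exact absurd h1 (not_lt.mpr (le_trans (le_of_lt (hP.2.1 m)) hv))
    have : m = i' := by
      rw [Fin.ext_iff]
      rw [Fin.lt_def] at him
      have := m.isLt
      omega
    rw [this]
  · exfalso
    have hmi : i < m := by
      by_contra hc
      push_neg at hc
      have hv : (e m).2 ≤ (e i).2 := hP.1.monotone hc
      rw [← hm] at hv
      exact absurd h1 (not_lt.mpr hv)
    have hmeq : m = i' := by
      rw [Fin.ext_iff]
      rw [Fin.lt_def] at hmi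
      have := m.isLt
      omega
    rw [hmeq, htop] at hm
    exact absurd hm (WithTop.coe_ne_top)

end Surj

section Monster
variable {α : Type*} [LinearOrder α] [DecidableEq α]

lemma face_to_build (F : Finset α) (hF : F.Nonempty) (K : ℕ)
    (e : Fin (K + 1) → α × WithTop α) (hP : FaceFun e) (hsupp : suppE e = F) :
    ∃ d : Bool × (Fin K → Fin 3),
      mcount d.2 + K + 2 = F.card + (if d.1 then 1 else 0) ∧ buildE F hF d.2 d.1 = e := by
  classical
  set t : Bool := decide ((e ⟨K, Nat.lt_succ_self K⟩).2 = ⊤) with htdef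
  set g : Fin K → Fin 3 := fun n =>
    if (e n.succ).1 = (e n.castSucc).1 then 0
    else if ((e n.succ).1 : WithTop α) = (e n.castSucc).2 then 1 else 2 with hgdef
  have httop : t = true ↔ (e ⟨K, Nat.lt_succ_self K⟩).2 = ⊤ := by
    rw [htdef]; exact decide_eq_true_iff
  have hgval : ∀ n (h : n < K),
      g ⟨n, h⟩ = if (e ⟨n + 1, by omega⟩).1 = (e ⟨n, by omega⟩).1 then 0
        else if ((e ⟨n + 1, by omega⟩).1 : WithTop α) = (e ⟨n, by omega⟩).2 then 1 else 2 :=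
    fun n h => rfl
  have vnetop : ∀ n (hn : n ≤ K), ¬(t = true ∧ n = K) →
      (e ⟨n, Nat.lt_succ_of_le hn⟩).2 ≠ ⊤ := by
    intro n hn hg htop
    rcases Nat.eq_or_lt_of_le hn with hK | hK
    · subst hK
      exact hg ⟨httop.mpr htop, rfl⟩
    · have hlt : (⟨n, Nat.lt_succ_of_le hn⟩ : Fin (K + 1)) < ⟨K, Nat.lt_succ_self K⟩ := by
        rw [Fin.lt_def]; exact hK
      have := hP.1 hlt
      dsimp only at this
      rw [htop] at this
      exact absurd this not_top_lt
  -- base case for fst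
  have hu0F : (e ⟨0, Nat.lt_succ_of_le (Nat.zero_le K)⟩).1 ∈ F :=
    (mem_F_iff hsupp).2 ⟨_, Or.inl rfl⟩
  have hbase_u : (e ⟨0, Nat.lt_succ_of_le (Nat.zero_le K)⟩).1 = xN F hF 0 := by
    have hx0le : xN F hF 0 ≤ (e ⟨0, Nat.lt_succ_of_le (Nat.zero_le K)⟩).1 := by
      obtain ⟨p, hp, hpx⟩ := xN_surj F hF hu0F
      rw [← hpx]
      exact xN_mono F hF (Nat.zero_le p)
    have hlt : ((xN F hF 0 : α) : WithTop α) < (e ⟨0, Nat.lt_succ_of_le (Nat.zero_le K)⟩).2 :=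
      lt_of_le_of_lt (WithTop.coe_le_coe.mpr hx0le) (hP.2.1 _)
    have h0 : (⟨0, Nat.lt_succ_of_le (Nat.zero_le K)⟩ : Fin (K + 1)) = 0 := rfl
    rw [h0] at hlt ⊢
    exact (below_elem hP hsupp (xN_mem F hF 0) hlt).symm
  -- the invariant
  have inv : ∀ n (hn : n ≤ K),
      (e ⟨n, Nat.lt_succ_of_le hn⟩).1 = uN F hF g n ∧
      (¬(t = true ∧ n = K) →
        (e ⟨n, Nat.lt_succ_of_le hn⟩).2 = ((xN F hF (vIdx g n) : α) : WithTop α) ∧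
        vIdx g n < F.card) := by
    intro n
    induction n with
    | zero =>
      intro hn
      refine ⟨hbase_u, ?_⟩
      intro hg0
      have hne := vnetop 0 hn hg0
      obtain ⟨b, hb⟩ := WithTop.ne_top_iff_exists.1 hne
      have hbF : b ∈ F := (mem_F_iff hsupp).2 ⟨_, Or.inr hb⟩
      obtain ⟨q, hqj, hqx⟩ := xN_surj F hF hbF
      have hsing : F.filter (fun c => c < xN F hF q) = {xN F hF 0} := by
        ext c
        simp only [mem_filter, mem_singleton]
        constructor
        · rintro ⟨hcF, hclt⟩
          have h0 : (⟨0, Nat.lt_succ_of_le hn⟩ : Fin (K + 1)) = 0 := rfl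
          have hcv : (c : WithTop α) < (e (0 : Fin (K + 1))).2 := by
            rw [← h0, ← hb]
            exact WithTop.coe_lt_coe.mpr (by rwa [hqx] at hclt)
          have := below_elem hP hsupp hcF hcv
          rw [this, ← h0, hbase_u]
        · rintro rfl
          refine ⟨xN_mem F hF 0, ?_⟩
          have h1 : ((xN F hF 0 : α) : WithTop α) < (e ⟨0, Nat.lt_succ_of_le hn⟩).2 := by
            rw [← hbase_u]
            exact hP.2.1 _
          rw [← hb] at h1
          have := WithTop.coe_lt_coe.mp h1
          rwa [← hqx] at this
      have hcard := card_filter_lt F hF hqj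
      rw [hsing, card_singleton] at hcard
      have hv0 : vIdx g 0 = 1 := rfl
      have hq1 : q = 1 := hcard.symm
      constructor
      · rw [← hb, ← hqx, hq1, hv0]
      · omega
    | succ n ih =>
      intro hn
      have h : n < K := hn
      obtain ⟨ihu, ihv⟩ := ih (le_of_lt h)
      obtain ⟨hvn, hbn⟩ := ihv (by rintro ⟨-, h2⟩; omega)
      have hch := hP.2.2 ⟨n, by omega⟩ ⟨n + 1, by omega⟩ rfl
      have hu1F : (e ⟨n + 1, by omega⟩).1 ∈ F := (mem_F_iff hsupp).2 ⟨_, Or.inl rfl⟩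
      have hulv : ((e ⟨n + 1, by omega⟩).1 : WithTop α) < (e ⟨n + 1, by omega⟩).2 :=
        hP.2.1 _
      have hvnlt : (e ⟨n, by omega⟩).2 < (e ⟨n + 1, by omega⟩).2 :=
        hP.1 (by simp [Fin.lt_def])
      -- the "gap is empty / singleton" machinery, guarded case
      by_cases hA : (e ⟨n + 1, by omega⟩).1 = (e ⟨n, by omega⟩).1
      · -- g = 0
        have hg0 : g ⟨n, h⟩ = 0 := by rw [hgval n h, if_pos hA]
        have hvsucc : vIdx g (n + 1) = vIdx g n + 1 := by
          rw [vIdx_succ h, if_neg (by simp [hg0])]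
        refine ⟨?_, ?_⟩
        · rw [uN_succ F hF g h, if_pos hg0, ← ihu]
          exact hA
        · intro hgK
          obtain ⟨b, hb⟩ := WithTop.ne_top_iff_exists.1 (vnetop (n + 1) hn hgK)
          have hbF : b ∈ F := (mem_F_iff hsupp).2 ⟨_, Or.inr hb⟩
          obtain ⟨q, hqj, hqx⟩ := xN_surj F hF hbF
          have hq_gt : vIdx g n < q := by
            have h1 := hvnlt
            rw [hvn, ← hb, ← hqx] at h1
            exact lt_of_xN_lt F hF (WithTop.coe_lt_coe.mp h1)
          have hgapempty : F.filter (fun c => xN F hF (vIdx g n) < c ∧ c < xN F hF q) = ∅ := by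
            rw [Finset.filter_eq_empty_iff]
            rintro c hcF ⟨hc1, hc2⟩
            have hcgap := gap_elem hP hsupp (rfl : ((⟨n, by omega⟩ : Fin (K + 1)) : ℕ) + 1
                = ((⟨n + 1, by omega⟩ : Fin (K + 1)) : ℕ)) hcF
              (by rw [hvn]; exact WithTop.coe_lt_coe.mpr hc1)
              (by rw [← hb]; exact WithTop.coe_lt_coe.mpr (by rwa [hqx] at hc2))
            rw [hA] at hcgap
            have h3 : ((e ⟨n, by omega⟩).1 : WithTop α) < (e ⟨n, by omega⟩).2 := hP.2.1 _
            rw [hvn] at h3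
            have h4 := WithTop.coe_lt_coe.mp h3
            rw [← hcgap] at h4
            exact absurd hc1 (not_lt.mpr (le_of_lt h4))
          have hcard := card_filter_between F hF hq_gt hqj
          rw [hgapempty, card_empty] at hcard
          have hq : q = vIdx g n + 1 := by omega
          constructor
          · rw [← hb, ← hqx, hq, hvsucc]
          · omega
      · by_cases hB : ((e ⟨n + 1, by omega⟩).1 : WithTop α) = (e ⟨n, by omega⟩).2
        · -- g = 1
          have hg1 : g ⟨n, h⟩ = 1 := by rw [hgval n h, if_neg hA, if_pos hB]
          have hvsucc : vIdx g (n + 1) = vIdx g n + 1 := by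
            rw [vIdx_succ h, if_neg (by simp [hg1])]
          have hu1x : (e ⟨n + 1, by omega⟩).1 = xN F hF (vIdx g n) := by
            apply WithTop.coe_inj.mp
            rw [hB, hvn]
          refine ⟨?_, ?_⟩
          · rw [uN_succ F hF g h, if_neg (by simp [hg1]), if_pos hg1]
            exact hu1x
          · intro hgK
            obtain ⟨b, hb⟩ := WithTop.ne_top_iff_exists.1 (vnetop (n + 1) hn hgK)
            have hbF : b ∈ F := (mem_F_iff hsupp).2 ⟨_, Or.inr hb⟩
            obtain ⟨q, hqj, hqx⟩ := xN_surj F hF hbF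
            have hq_gt : vIdx g n < q := by
              have h1 := hvnlt
              rw [hvn, ← hb, ← hqx] at h1
              exact lt_of_xN_lt F hF (WithTop.coe_lt_coe.mp h1)
            have hgapempty : F.filter
                (fun c => xN F hF (vIdx g n) < c ∧ c < xN F hF q) = ∅ := by
              rw [Finset.filter_eq_empty_iff]
              rintro c hcF ⟨hc1, hc2⟩
              have hcgap := gap_elem hP hsupp (rfl : ((⟨n, by omega⟩ : Fin (K + 1)) : ℕ) + 1
                  = ((⟨n + 1, by omega⟩ : Fin (K + 1)) : ℕ)) hcF
                (by rw [hvn]; exact WithTop.coe_lt_coe.mpr hc1)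
                (by rw [← hb]; exact WithTop.coe_lt_coe.mpr (by rwa [hqx] at hc2))
              rw [hu1x] at hcgap
              exact absurd hc1 (by rw [hcgap]; exact lt_irrefl _)
            have hcard := card_filter_between F hF hq_gt hqj
            rw [hgapempty, card_empty] at hcard
            have hq : q = vIdx g n + 1 := by omega
            constructor
            · rw [← hb, ← hqx, hq, hvsucc]
            · omega
        · -- g = 2
          have hg2 : g ⟨n, h⟩ = 2 := by rw [hgval n h, if_neg hA, if_neg hB]
          have hvsucc : vIdx g (n + 1) = vIdx g n + 2 := by
            rw [vIdx_succ h, if_pos hg2]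
          have hchlt : (e ⟨n, by omega⟩).2 < ((e ⟨n + 1, by omega⟩).1 : WithTop α) := by
            rcases hch with h1 | h1
            · exact absurd h1.symm hA
            · exact lt_of_le_of_ne h1 (fun hx => hB hx.symm)
          obtain ⟨r, hrj, hrx⟩ := xN_surj F hF hu1F
          have hr_gt : vIdx g n < r := by
            have h1 := hchlt
            rw [hvn, ← hrx] at h1
            exact lt_of_xN_lt F hF (WithTop.coe_lt_coe.mp h1)
          by_cases hgK : t = true ∧ n + 1 = K
          · -- top case: only fst needed
            have htop : (e ⟨n + 1, by omega⟩).2 = ⊤ := by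
              have h1 := httop.mp hgK.1
              have h2 : (⟨n + 1, by omega⟩ : Fin (K + 1)) = ⟨K, Nat.lt_succ_self K⟩ :=
                Fin.ext hgK.2
              rw [h2]
              exact h1
            have habsing : F.filter (fun c => xN F hF (vIdx g n) < c)
                = {(e ⟨n + 1, by omega⟩).1} := by
              ext c
              simp only [mem_filter, mem_singleton]
              constructor
              · rintro ⟨hcF, hc1⟩
                exact above_elem hP hsupp (rfl : ((⟨n, by omega⟩ : Fin (K + 1)) : ℕ) + 1
                    = ((⟨n + 1, by omega⟩ : Fin (K + 1)) : ℕ)) hgK.2 htop hcF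
                  (by rw [hvn]; exact WithTop.coe_lt_coe.mpr hc1)
              · rintro rfl
                refine ⟨hu1F, ?_⟩
                have h1 := hchlt
                rw [hvn] at h1
                exact WithTop.coe_lt_coe.mp h1
            have hcard := card_filter_gt F hF hbn
            rw [habsing, card_singleton] at hcard
            have hr : r = vIdx g n + 1 := by omega
            refine ⟨?_, fun hgK' => absurd hgK hgK'⟩
            rw [uN_succ F hF g h, if_neg (by simp [hg2]), if_neg (by simp [hg2])]
            rw [← hrx, hr]
          · -- guarded case
            obtain ⟨b, hb⟩ := WithTop.ne_top_iff_exists.1 (vnetop (n + 1) hn hgK)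
            have hbF : b ∈ F := (mem_F_iff hsupp).2 ⟨_, Or.inr hb⟩
            obtain ⟨q, hqj, hqx⟩ := xN_surj F hF hbF
            have hq_gt : vIdx g n < q := by
              have h1 := hvnlt
              rw [hvn, ← hb, ← hqx] at h1
              exact lt_of_xN_lt F hF (WithTop.coe_lt_coe.mp h1)
            have hgapsing : F.filter (fun c => xN F hF (vIdx g n) < c ∧ c < xN F hF q)
                = {(e ⟨n + 1, by omega⟩).1} := by
              ext c
              simp only [mem_filter, mem_singleton]
              constructor
              · rintro ⟨hcF, hc1, hc2⟩
                exact gap_elem hP hsupp (rfl : ((⟨n, by omega⟩ : Fin (K + 1)) : ℕ) + 1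
                    = ((⟨n + 1, by omega⟩ : Fin (K + 1)) : ℕ)) hcF
                  (by rw [hvn]; exact WithTop.coe_lt_coe.mpr hc1)
                  (by rw [← hb]; exact WithTop.coe_lt_coe.mpr (by rwa [hqx] at hc2))
              · rintro rfl
                refine ⟨hu1F, ?_, ?_⟩
                · have h1 := hchlt
                  rw [hvn] at h1
                  exact WithTop.coe_lt_coe.mp h1
                · have h1 := hulv
                  rw [← hb] at h1
                  have := WithTop.coe_lt_coe.mp h1
                  rwa [← hqx] at this
            have hcard := card_filter_between F hF hq_gt hqj
            rw [hgapsing, card_singleton] at hcard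
            have hq : q = vIdx g n + 2 := by omega
            have hr_lt : r < q := by
              have h1 := hulv
              rw [← hb, ← hrx, ← hqx] at h1
              exact lt_of_xN_lt F hF (WithTop.coe_lt_coe.mp h1)
            have hr : r = vIdx g n + 1 := by omega
            refine ⟨?_, ?_⟩
            · rw [uN_succ F hF g h, if_neg (by simp [hg2]), if_neg (by simp [hg2])]
              rw [← hrx, hr]
            · intro _
              constructor
              · rw [← hb, ← hqx, hq, hvsucc]
              · omega
  refine ⟨(t, g), ?_⟩
  show mcount g + K + 2 = F.card + (if t = true then 1 else 0) ∧ buildE F hF g t = e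
  rcases Bool.eq_false_or_eq_true t with ht | ht
  · -- t = true
    have hite : (if t = true then 1 else 0) = 1 := by simp [ht]
    have htop : (e ⟨K, Nat.lt_succ_self K⟩).2 = ⊤ := httop.mp ht
    rcases Nat.eq_zero_or_pos K with hK0 | hKpos
    · -- K = 0
      have hKfin : (⟨K, Nat.lt_succ_self K⟩ : Fin (K + 1))
          = ⟨0, Nat.lt_succ_of_le (Nat.zero_le K)⟩ := Fin.ext hK0
      have hFeq : F = {(e ⟨K, Nat.lt_succ_self K⟩).1} := by
        apply Finset.eq_singleton_iff_unique_mem.mpr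
        constructor
        · exact (mem_F_iff hsupp).2 ⟨_, Or.inl rfl⟩
        · intro a haF
          obtain ⟨m, hm | hm⟩ := (mem_F_iff hsupp).1 haF
          · have hmK : m = ⟨K, Nat.lt_succ_self K⟩ := by
              rw [Fin.ext_iff]
              have := m.isLt
              omega
            rw [hm, hmK]
          · exfalso
            have hmK : m = ⟨K, Nat.lt_succ_self K⟩ := by
              rw [Fin.ext_iff]
              have := m.isLt
              omega
            rw [hmK, htop] at hm
            exact absurd hm WithTop.coe_ne_top
      have hcard1 : F.card = 1 := by rw [hFeq]; exact card_singleton _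
      have hm0 : mcount g = 0 := by
        have := mcount_le g
        omega
      constructor
      · rw [hite]
        omega
      · funext i
        have hiK : i = ⟨K, Nat.lt_succ_self K⟩ := by
          rw [Fin.ext_iff]
          have := i.isLt
          omega
        apply Prod.ext
        · show uN F hF g (i : ℕ) = (e i).1
          rw [hiK, hKfin]
          exact (inv 0 (Nat.zero_le K)).1.symm
        · show (if t = true ∧ (i : ℕ) = K then (⊤ : WithTop α)
              else ((xN F hF (vIdx g (i : ℕ)) : α) : WithTop α)) = (e i).2
          rw [hiK, if_pos ⟨ht, rfl⟩]
          exact htop.symm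
    · -- K ≥ 1
      obtain ⟨K', rfl⟩ : ∃ K', K = K' + 1 := ⟨K - 1, by omega⟩
      have h : K' < K' + 1 := Nat.lt_succ_self K'
      obtain ⟨ihu, ihv⟩ := inv K' (by omega)
      obtain ⟨hvn, hbn⟩ := ihv (by rintro ⟨-, h2⟩; omega)
      have hch := hP.2.2 ⟨K', by omega⟩ ⟨K' + 1, by omega⟩ rfl
      have hu1F : (e ⟨K' + 1, by omega⟩).1 ∈ F := (mem_F_iff hsupp).2 ⟨_, Or.inl rfl⟩
      have htop' : (e ⟨K' + 1, by omega⟩).2 = ⊤ := htop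
      have hkey : (e ⟨K' + 1, by omega⟩).1 = uN F hF g (K' + 1)
          ∧ vIdx g (K' + 1) = F.card := by
        by_cases hA : (e ⟨K' + 1, by omega⟩).1 = (e ⟨K', by omega⟩).1
        · have hg0 : g ⟨K', h⟩ = 0 := by rw [hgval K' h, if_pos hA]
          have hab : F.filter (fun c => xN F hF (vIdx g K') < c) = ∅ := by
            rw [Finset.filter_eq_empty_iff]
            rintro c hcF hc1
            have hcab := above_elem hP hsupp
              (rfl : ((⟨K', by omega⟩ : Fin (K' + 2)) : ℕ) + 1
                = ((⟨K' + 1, by omega⟩ : Fin (K' + 2)) : ℕ)) rfl htop' hcF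
              (by rw [hvn]; exact WithTop.coe_lt_coe.mpr hc1)
            rw [hA] at hcab
            have h3 : ((e ⟨K', by omega⟩).1 : WithTop α) < (e ⟨K', by omega⟩).2 := hP.2.1 _
            rw [hvn] at h3
            have h4 := WithTop.coe_lt_coe.mp h3
            rw [← hcab] at h4
            exact absurd hc1 (not_lt.mpr (le_of_lt h4))
          have hcard := card_filter_gt F hF hbn
          rw [hab, card_empty] at hcard
          have hvsucc : vIdx g (K' + 1) = vIdx g K' + 1 := by
            rw [vIdx_succ h, if_neg (by simp [hg0])]
          constructor
          · rw [uN_succ F hF g h, if_pos hg0, ← ihu]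
            exact hA
          · rw [hvsucc]
            omega
        · by_cases hB : ((e ⟨K' + 1, by omega⟩).1 : WithTop α) = (e ⟨K', by omega⟩).2
          · have hg1 : g ⟨K', h⟩ = 1 := by rw [hgval K' h, if_neg hA, if_pos hB]
            have hu1x : (e ⟨K' + 1, by omega⟩).1 = xN F hF (vIdx g K') := by
              apply WithTop.coe_inj.mp
              rw [hB, hvn]
            have hab : F.filter (fun c => xN F hF (vIdx g K') < c) = ∅ := by
              rw [Finset.filter_eq_empty_iff]
              rintro c hcF hc1
              have hcab := above_elem hP hsupp
                (rfl : ((⟨K', by omega⟩ : Fin (K' + 2)) : ℕ) + 1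
                  = ((⟨K' + 1, by omega⟩ : Fin (K' + 2)) : ℕ)) rfl htop' hcF
                (by rw [hvn]; exact WithTop.coe_lt_coe.mpr hc1)
              rw [hu1x] at hcab
              exact absurd hc1 (by rw [hcab]; exact lt_irrefl _)
            have hcard := card_filter_gt F hF hbn
            rw [hab, card_empty] at hcard
            have hvsucc : vIdx g (K' + 1) = vIdx g K' + 1 := by
              rw [vIdx_succ h, if_neg (by simp [hg1])]
            constructor
            · have hne0 : ¬(g ⟨K', h⟩ = 0) := by simp [hg1]
              rw [uN_succ F hF g h, if_neg hne0, if_pos hg1]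
              exact hu1x
            · rw [hvsucc]
              omega
          · have hg2 : g ⟨K', h⟩ = 2 := by rw [hgval K' h, if_neg hA, if_neg hB]
            have hchlt : (e ⟨K', by omega⟩).2 < ((e ⟨K' + 1, by omega⟩).1 : WithTop α) := by
              rcases hch with h1 | h1
              · exact absurd h1.symm hA
              · exact lt_of_le_of_ne h1 (fun hx => hB hx.symm)
            obtain ⟨r, hrj, hrx⟩ := xN_surj F hF hu1F
            have hr_gt : vIdx g K' < r := by
              have h1 := hchlt
              rw [hvn, ← hrx] at h1
              exact lt_of_xN_lt F hF (WithTop.coe_lt_coe.mp h1)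
            have habs : F.filter (fun c => xN F hF (vIdx g K') < c)
                = {(e ⟨K' + 1, by omega⟩).1} := by
              ext c
              simp only [mem_filter, mem_singleton]
              constructor
              · rintro ⟨hcF, hc1⟩
                exact above_elem hP hsupp
                  (rfl : ((⟨K', by omega⟩ : Fin (K' + 2)) : ℕ) + 1
                    = ((⟨K' + 1, by omega⟩ : Fin (K' + 2)) : ℕ)) rfl htop' hcF
                  (by rw [hvn]; exact WithTop.coe_lt_coe.mpr hc1)
              · rintro rfl
                refine ⟨hu1F, ?_⟩
                have h1 := hchlt
                rw [hvn] at h1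
                exact WithTop.coe_lt_coe.mp h1
            have hcard := card_filter_gt F hF hbn
            rw [habs, card_singleton] at hcard
            have hvsucc : vIdx g (K' + 1) = vIdx g K' + 2 := by
              rw [vIdx_succ h, if_pos hg2]
            have hr : r = vIdx g K' + 1 := by omega
            constructor
            · have hne0 : ¬(g ⟨K', h⟩ = 0) := by simp [hg2]
              have hne1 : ¬(g ⟨K', h⟩ = 1) := by simp [hg2]
              rw [uN_succ F hF g h, if_neg hne0, if_neg hne1, ← hrx, hr]
            · rw [hvsucc]
              omega
      obtain ⟨hufin, hvKj⟩ := hkey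
      constructor
      · rw [hite]
        have hvidx := vIdx_K g
        omega
      · funext i
        rcases Nat.lt_or_ge (i : ℕ) (K' + 1) with hi | hi
        · obtain ⟨hf, hv2⟩ := inv i (by omega)
          obtain ⟨hs, -⟩ := hv2 (by rintro ⟨-, h2⟩; omega)
          apply Prod.ext
          · exact hf.symm
          · show (if t = true ∧ (i : ℕ) = K' + 1 then (⊤ : WithTop α)
                else ((xN F hF (vIdx g (i : ℕ)) : α) : WithTop α)) = (e i).2
            rw [if_neg (by rintro ⟨-, h2⟩; omega)]
            exact hs.symm
        · have hiK : i = ⟨K' + 1, Nat.lt_succ_self (K' + 1)⟩ := by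
            apply Fin.ext
            show (i : ℕ) = K' + 1
            have := i.isLt
            omega
          apply Prod.ext
          · show uN F hF g (i : ℕ) = (e i).1
            rw [hiK]
            exact hufin.symm
          · show (if t = true ∧ (i : ℕ) = K' + 1 then (⊤ : WithTop α)
                else ((xN F hF (vIdx g (i : ℕ)) : α) : WithTop α)) = (e i).2
            rw [hiK, if_pos ⟨ht, rfl⟩]
            exact htop'.symm

  · -- t = false
    have hite : (if t = true then 1 else 0) = 0 := by simp [ht]
    have hall : ∀ n (hn : n ≤ K), (e ⟨n, Nat.lt_succ_of_le hn⟩).1 = uN F hF g n ∧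
        (e ⟨n, Nat.lt_succ_of_le hn⟩).2 = ((xN F hF (vIdx g n) : α) : WithTop α) ∧
        vIdx g n < F.card := by
      intro n hn
      obtain ⟨h1, h2⟩ := inv n hn
      exact ⟨h1, (h2 (by simp [ht])).1, (h2 (by simp [ht])).2⟩
    have hmax : ∀ a ∈ F, (a : WithTop α) ≤ (e ⟨K, Nat.lt_succ_self K⟩).2 := by
      intro a haF
      obtain ⟨m, hm | hm⟩ := (mem_F_iff hsupp).1 haF
      · rw [hm]
        have hml : m ≤ ⟨K, Nat.lt_succ_self K⟩ := by
          rw [Fin.le_def]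
          show (m : ℕ) ≤ K
          have := m.isLt
          omega
        exact le_trans (le_of_lt (hP.2.1 m)) (hP.1.monotone hml)
      · rw [hm]
        have hml : m ≤ ⟨K, Nat.lt_succ_self K⟩ := by
          rw [Fin.le_def]
          show (m : ℕ) ≤ K
          have := m.isLt
          omega
        exact hP.1.monotone hml
    obtain ⟨-, hvKe, hbK⟩ := hall K le_rfl
    have hKj : vIdx g K = F.card - 1 := by
      by_contra hne
      have hlt : vIdx g K < F.card - 1 := by omega
      have h1 := hmax (xN F hF (F.card - 1)) (xN_mem F hF _)
      rw [hvKe] at h1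
      have h2 := WithTop.coe_le_coe.mp h1
      have h3 := xN_lt F hF hlt (by have := Finset.card_pos.mpr hF; omega)
      exact absurd h2 (not_le.mpr h3)
    constructor
    · have hvidx := vIdx_K g
      have hj1 := Finset.card_pos.mpr hF
      rw [hite]
      omega
    · funext i
      obtain ⟨hf, hs, -⟩ := hall i (by omega)
      apply Prod.ext
      · exact hf.symm
      · show (if t = true ∧ (i : ℕ) = K then (⊤ : WithTop α)
            else ((xN F hF (vIdx g (i : ℕ)) : α) : WithTop α)) = (e i).2
        rw [if_neg (by simp [ht])]
        exact hs.symm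

end Monster

section Final
variable {α : Type*} [LinearOrder α] [DecidableEq α]

lemma core_count [Fintype α] (F : Finset α) (hF : F.Nonempty) (K : ℕ) :
    (Finset.univ.filter fun e : Fin (K + 1) → α × WithTop α =>
      FaceFun e ∧ suppE e = F).card = (Dset K F.card).card := by
  symm
  apply Finset.card_bij (i := fun d (_ : d ∈ Dset K F.card) => buildE F hF d.2 d.1)
  · intro d hd
    rw [Finset.mem_filter]
    have hcond : mcount d.2 + K + 2 = F.card + (if d.1 then 1 else 0) :=
      (Finset.mem_filter.1 hd).2
    obtain ⟨h1, h2⟩ := buildE_face F hF d.2 d.1 hcond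
    exact ⟨Finset.mem_univ _, h1, h2⟩
  · intro d1 h1 d2 h2 heq
    have c1 := (Finset.mem_filter.1 h1).2
    have c2 := (Finset.mem_filter.1 h2).2
    obtain ⟨ht, hg⟩ := buildE_inj F hF d1.2 d2.2 d1.1 d2.1 c1 c2 heq
    exact Prod.ext ht hg
  · intro e he
    obtain ⟨hP, hsupp⟩ := (Finset.mem_filter.1 he).2
    obtain ⟨d, hd1, hd2⟩ := face_to_build F hF K e hP hsupp
    exact ⟨d, Finset.mem_filter.mpr ⟨Finset.mem_univ _, hd1⟩, hd2⟩

end Final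

/-- **f-vector of the Tchebyshev triangulation** (Hetyei, generalized to cell complexes).
For a finite collection `A` of nonempty subsets of a linearly ordered finite set and every
`k ≥ 1`:
`2·f_{k-1}(T(A)) = ∑_{j=k}^{2k} s_j(A) · 2^(2k-j) · ( C(k,2k-j) + C(k-1,2k-j) )`. -/
theorem tchebFaces_count {α : Type*} [LinearOrder α] [Fintype α] [DecidableEq α]
    (A : Finset (Finset α)) (hA : ∀ F ∈ A, F ≠ ∅) :
    ∀ k, 1 ≤ k →
      2 * (tchebFaces A k).ncard
        = ∑ j ∈ Finset.Icc k (2 * k),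
            sCount A j * 2 ^ (2 * k - j) *
              (Nat.choose k (2 * k - j) + Nat.choose (k - 1) (2 * k - j)) := by
  intro k hk
  obtain ⟨K, rfl⟩ : ∃ K, k = K + 1 := ⟨k - 1, by omega⟩
  rw [ncard_tchebFaces A (K + 1)]
  rw [Finset.card_eq_sum_card_fiberwise
    (f := fun e : Fin (K + 1) → α × WithTop α => suppE e)
    (t := A) (fun e he => (Finset.mem_filter.1 he).2.2)]
  have hterm : ∀ F ∈ A,
      ((Finset.univ.filter fun e : Fin (K + 1) → α × WithTop α =>
          FaceFun e ∧ suppE e ∈ A).filter fun e => suppE e = F).card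
        = (Dset K F.card).card := by
    intro F hFA
    rw [Finset.filter_filter]
    have hflt : (Finset.univ.filter fun e : Fin (K + 1) → α × WithTop α =>
        (FaceFun e ∧ suppE e ∈ A) ∧ suppE e = F)
        = Finset.univ.filter fun e => FaceFun e ∧ suppE e = F := by
      apply Finset.filter_congr
      intro e _
      constructor
      · rintro ⟨⟨h1, -⟩, h3⟩; exact ⟨h1, h3⟩
      · rintro ⟨h1, h3⟩; exact ⟨⟨h1, h3 ▸ hFA⟩, h3⟩
    rw [hflt]
    exact core_count F (Finset.nonempty_iff_ne_empty.mpr (hA F hFA)) K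
  rw [Finset.sum_congr rfl hterm, Finset.mul_sum]
  have hsub : ∑ F ∈ A, 2 * (Dset K F.card).card
      = ∑ F ∈ A.filter (fun F => F.card ∈ Finset.Icc (K + 1) (2 * (K + 1))),
          2 * (Dset K F.card).card := by
    symm
    apply Finset.sum_subset (Finset.filter_subset _ _)
    intro F hFA hnot
    have hni : F.card ∉ Finset.Icc (K + 1) (2 * (K + 1)) := by
      intro hmem
      exact hnot (Finset.mem_filter.mpr ⟨hFA, hmem⟩)
    rw [Finset.mem_Icc] at hni
    rw [Dset_card_zero K F.card (by omega), mul_zero]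
  rw [hsub]
  rw [← Finset.sum_fiberwise_of_maps_to
    (g := fun F : Finset α => F.card) (t := Finset.Icc (K + 1) (2 * (K + 1)))
    (fun F hFm => (Finset.mem_filter.1 hFm).2) (fun F => 2 * (Dset K F.card).card)]
  apply Finset.sum_congr rfl
  intro j hj
  have hjI := hj
  rw [Finset.mem_Icc] at hjI
  have hx : (A.filter (fun F => F.card ∈ Finset.Icc (K + 1) (2 * (K + 1)))).filter
      (fun F => F.card = j) = A.filter fun F => F.card = j := by
    rw [Finset.filter_filter]
    apply Finset.filter_congr
    intro F _
    constructor
    · rintro ⟨-, h2⟩; exact h2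
    · intro h2; exact ⟨by rw [h2]; exact hj, h2⟩
  rw [hx]
  rw [Finset.sum_congr rfl (fun F hFm => by rw [(Finset.mem_filter.1 hFm).2])]
  rw [Finset.sum_const, smul_eq_mul]
  rw [two_Dset_card K j hjI.1 (by omega)]
  show sCount A j * (2 ^ (2 * (K + 1) - j) * ((K + 1).choose (2 * (K + 1) - j)
      + K.choose (2 * (K + 1) - j))) = _
  rw [← mul_assoc]
  simp only [Nat.add_sub_cancel]
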